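/- arXiv:2509.19829 — 2 statements merged into one kernel-verified Lean document; each statement's English description precedes it below -/
import Mathlib

section
/- Let B be a Blaschke product with Property 𝔅 and let θ ∈ (0,1). Then every connected component of the level set Ω_{B,θ} = {z ∈ 𝔻 : |B(z)| < θ} contains at least one zero of B and only finitely many zeros of B. -/
noncomputable section

/-- The level set Ω_{f,θ} = {z ∈ 𝔻 : |f(z)| < θ}. -/
def levelSet (f : ℂ → ℂ) (θ : ℝ) : Set ℂ :=
  {z : ℂ | ‖z‖ < 1 ∧ ‖f z‖ < θ}

/-- An inner function: holomorphic and bounded by 1 on 𝔻, with radial limits of modulus 1 a.e. -/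
def IsInner (u : ℂ → ℂ) : Prop :=
  DifferentiableOn ℂ u (Metric.ball (0:ℂ) 1) ∧
  (∀ z ∈ Metric.ball (0:ℂ) 1, ‖u z‖ ≤ 1) ∧
  (∀ᵐ θ : ℝ ∂MeasureTheory.volume,
    Filter.Tendsto
      (fun r : ℝ => ‖u ((r : ℂ) * Complex.exp ((θ : ℂ) * Complex.I))‖)
      (nhdsWithin 1 (Set.Iio 1)) (nhds 1))

/-- The pseudo-hyperbolic distance on 𝔻. -/
def pseudoDist (z w : ℂ) : ℝ :=
  ‖z - w‖ / ‖1 - (starRingEnd ℂ) z * w‖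

/-- δ_{u,η} : sup of pseudo-hyperbolic distances of pairs lying in a common component of Ω_{u,η}. -/
def deltaLevel (u : ℂ → ℂ) (η : ℝ) : ℝ :=
  sSup {d : ℝ | ∃ z₁ z₂ : ℂ, z₁ ∈ levelSet u η ∧
    z₂ ∈ connectedComponentIn (levelSet u η) z₁ ∧ d = pseudoDist z₁ z₂}

/-- Property 𝔅. -/
def PropertyB (u : ℂ → ℂ) : Prop :=
  ∀ θ ∈ Set.Ioo (0:ℝ) 1, ∀ z ∈ levelSet u θ,
    closure (connectedComponentIn (levelSet u θ) z) ⊆ Metric.ball (0:ℂ) 1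

/-- θ-weak Property 𝔅. -/
def WeakPropertyBAt (u : ℂ → ℂ) (θ : ℝ) : Prop :=
  θ ∈ Set.Ioo (0:ℝ) 1 ∧ ∀ z ∈ levelSet u θ,
    closure (connectedComponentIn (levelSet u θ) z) ⊆ Metric.ball (0:ℂ) 1

/-- η-weak Property 𝔥. -/
def WeakPropertyHAt (u : ℂ → ℂ) (η : ℝ) : Prop :=
  WeakPropertyBAt u η ∧ deltaLevel u η < 1

/-- Supremum norm over the unit disk. -/
def supNormD (f : ℂ → ℂ) : ℝ :=
  ⨆ z : (Metric.ball (0:ℂ) 1), ‖f (z : ℂ)‖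

/-- A Blaschke product. -/
def IsBlaschkeProduct (B : ℂ → ℂ) : Prop :=
  ∃ (ι : Type) (_ : Countable ι) (m : ℕ) (lam : ℂ) (α : ι → ℂ),
    ‖lam‖ = 1 ∧
    (∀ n, ‖α n‖ < 1 ∧ α n ≠ 0) ∧
    (Summable fun n => 1 - ‖α n‖) ∧
    ∀ z ∈ Metric.ball (0:ℂ) 1,
      B z = lam * z ^ m *
        ∏' n, ((‖α n‖ : ℂ) / α n) * ((α n - z) / (1 - (starRingEnd ℂ) (α n) * z))

/-- Order of vanishing (multiplicity of zero) via iterated derivatives. -/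
def zeroOrder (f : ℂ → ℂ) (z : ℂ) : ℕ :=
  sInf {n : ℕ | iteratedDeriv n f z ≠ 0}

-- product minus one estimate
theorem prodEst (ι : Type) (s : Finset ι) (a : ι → ℂ) (u : ι → ℝ) (hu : ∀ i, 0 ≤ u i)
    (h : ∀ i ∈ s, ‖a i - 1‖ ≤ u i) :
    ‖(∏ i ∈ s, a i) - 1‖ ≤ (∏ i ∈ s, (1 + u i)) - 1 := by
  classical
  induction s using Finset.induction_on with
  | empty => simp
  | insert j s hj ih =>
    rw [Finset.prod_insert hj, Finset.prod_insert hj]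
    have hj' := h j (Finset.mem_insert_self j s)
    have ihs := ih (fun i hi => h i (Finset.mem_insert_of_mem hi))
    have key : a j * ∏ i ∈ s, a i - 1 = a j * ((∏ i ∈ s, a i) - 1) + (a j - 1) := by ring
    rw [key]
    have haj : ‖a j‖ ≤ 1 + u j := by
      have := hj'
      calc ‖a j‖ = ‖(a j - 1) + 1‖ := by ring_nf
        _ ≤ ‖a j - 1‖ + 1 := by
            simpa using norm_add_le (a j - 1) 1
        _ ≤ 1 + u j := by linarith
    have hprodnn : (1:ℝ) ≤ ∏ i ∈ s, (1 + u i) := by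
      calc (1:ℝ) = ∏ _i ∈ s, (1:ℝ) := by simp
        _ ≤ ∏ i ∈ s, (1 + u i) :=
            Finset.prod_le_prod (fun i _ => by norm_num) (fun i _ => by linarith [hu i])
    calc ‖a j * ((∏ i ∈ s, a i) - 1) + (a j - 1)‖
        ≤ ‖a j‖ * ‖(∏ i ∈ s, a i) - 1‖ + ‖a j - 1‖ := by
          simpa [norm_mul] using norm_add_le (a j * ((∏ i ∈ s, a i) - 1)) (a j - 1)
      _ ≤ (1 + u j) * ((∏ i ∈ s, (1 + u i)) - 1) + u j := by
          have h1 : ‖(∏ i ∈ s, a i) - 1‖ ≤ (∏ i ∈ s, (1 + u i)) - 1 := ihs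
          have h0 : (0:ℝ) ≤ ‖(∏ i ∈ s, a i) - 1‖ := norm_nonneg _
          nlinarith [hu j, norm_nonneg (a j)]
      _ = (1 + u j) * ∏ i ∈ s, (1 + u i) - 1 := by ring

theorem prodExp (ι : Type) (s : Finset ι) (u : ι → ℝ) (hu : ∀ i, 0 ≤ u i) :
    (∏ i ∈ s, (1 + u i)) ≤ Real.exp (∑ i ∈ s, u i) := by
  rw [Real.exp_sum]
  exact Finset.prod_le_prod (fun i _ => by linarith [hu i])
    (fun i _ => by linarith [Real.add_one_le_exp (u i)])

theorem denomNe (a z : ℂ) (ha : ‖a‖ < 1) (hz : ‖z‖ ≤ 1) (hz1 : ‖z‖ < 1 ∨ ‖a‖ < 1) :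
    1 - (starRingEnd ℂ) a * z ≠ 0 := by
  intro h
  have : ‖(starRingEnd ℂ) a * z‖ = 1 := by
    have : (starRingEnd ℂ) a * z = 1 := by linear_combination -h
    rw [this]; simp
  rw [norm_mul, Complex.norm_conj] at this
  nlinarith [norm_nonneg a, norm_nonneg z]

theorem factorEst (a z : ℂ) (r : ℝ) (ha : ‖a‖ < 1) (ha0 : a ≠ 0)
    (hr : r < 1) (hz : ‖z‖ ≤ r) :
    ‖(((‖a‖ : ℂ) / a) * ((a - z) / (1 - (starRingEnd ℂ) a * z))) - 1‖
      ≤ (1 - ‖a‖) * (2 / (1 - r)) := by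
  have hr0 : 0 ≤ r := le_trans (norm_nonneg z) hz
  have hz1 : ‖z‖ < 1 := lt_of_le_of_lt hz hr
  have hd : 1 - (starRingEnd ℂ) a * z ≠ 0 := denomNe a z ha (le_of_lt hz1) (Or.inl hz1)
  have key : (((‖a‖ : ℂ) / a) * ((a - z) / (1 - (starRingEnd ℂ) a * z))) - 1
      = -((1 - (‖a‖ : ℂ)) * (a + (‖a‖ : ℂ) * z)) / (a * (1 - (starRingEnd ℂ) a * z)) := by
    have hsq : (starRingEnd ℂ) a * a = ((‖a‖ : ℂ))^2 := by
      rw [mul_comm, Complex.mul_conj]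
      norm_cast
      exact (Complex.sq_norm a).symm
    rw [div_mul_div_comm, div_sub_one (mul_ne_zero ha0 hd)]
    congr 1
    linear_combination (z) * hsq
  rw [key]
  rw [norm_div, norm_neg, norm_mul, norm_mul]
  have habs1 : ‖1 - (‖a‖ : ℂ)‖ = 1 - ‖a‖ := by
    rw [← Complex.ofReal_one, ← Complex.ofReal_sub, Complex.norm_real, Real.norm_eq_abs, _root_.abs_of_nonneg (by linarith)]
  have hnum : ‖a + (‖a‖ : ℂ) * z‖ ≤ ‖a‖ * (1 + r) := by
    calc ‖a + (‖a‖ : ℂ) * z‖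
        ≤ ‖a‖ + ‖(‖a‖ : ℂ) * z‖ := norm_add_le _ _
      _ = ‖a‖ + ‖a‖ * ‖z‖ := by
          rw [norm_mul, Complex.norm_real, Real.norm_eq_abs, _root_.abs_of_nonneg (norm_nonneg a)]
      _ ≤ ‖a‖ * (1 + r) := by nlinarith [norm_nonneg a]
  have hden : 1 - r ≤ ‖1 - (starRingEnd ℂ) a * z‖ := by
    have h1 : ‖(starRingEnd ℂ) a * z‖ ≤ r := by
      rw [norm_mul, Complex.norm_conj]
      nlinarith [norm_nonneg z, norm_nonneg a]
    calc (1:ℝ) - r ≤ 1 - ‖(starRingEnd ℂ) a * z‖ := by linarith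
      _ ≤ ‖1 - (starRingEnd ℂ) a * z‖ := by
          have := norm_sub_norm_le (1:ℂ) ((starRingEnd ℂ) a * z)
          simpa using this
  have ha0' : 0 < ‖a‖ := norm_pos_iff.mpr ha0
  rw [habs1]
  rw [div_le_iff₀ (mul_pos ha0' (norm_pos_iff.mpr hd))]
  have hA1 : (0:ℝ) < 1 - ‖a‖ := by linarith
  have hrpos : (0:ℝ) < 1 - r := by linarith
  calc (1 - ‖a‖) * ‖a + (‖a‖ : ℂ) * z‖
      ≤ (1 - ‖a‖) * (‖a‖ * (1 + r)) :=
        mul_le_mul_of_nonneg_left hnum (by linarith)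
    _ ≤ (1 - ‖a‖) * (‖a‖ * 2) := by nlinarith [mul_pos (mul_pos hA1 ha0') hrpos]
    _ = (1 - ‖a‖) * (2 / (1 - r)) * (‖a‖ * (1 - r)) := by
        field_simp
    _ ≤ (1 - ‖a‖) * (2 / (1 - r)) * (‖a‖ * ‖1 - (starRingEnd ℂ) a * z‖) := by
        apply mul_le_mul_of_nonneg_left
        · exact mul_le_mul_of_nonneg_left hden (norm_nonneg a)
        · exact mul_nonneg (by linarith) (by positivity)

open Filter in
theorem uniformCauchyProd {ι : Type} (f : ι → ℂ → ℂ) (u : ι → ℝ) (s : Set ℂ)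
    (hu : ∀ i, 0 ≤ u i) (hsum : Summable u)
    (hle : ∀ i, ∀ z ∈ s, ‖f i z - 1‖ ≤ u i) :
    UniformCauchySeqOn (fun t : Finset ι => fun z => ∏ i ∈ t, f i z) Filter.atTop s := by
  classical
  set E : ℝ := Real.exp (∑' i, u i) with hE
  have hE1 : (1:ℝ) ≤ E := Real.one_le_exp (tsum_nonneg hu)
  -- bound on partial products
  have hPbound : ∀ (t : Finset ι), ∀ z ∈ s, ‖∏ i ∈ t, f i z‖ ≤ E := by
    intro t z hz
    have h1 := prodEst ι t (fun i => f i z) u hu (fun i _ => hle i z hz)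
    have h2 := prodExp ι t u hu
    have h3 : ∑ i ∈ t, u i ≤ ∑' i, u i := Summable.sum_le_tsum t (fun i _ => hu i) hsum
    have h4 : Real.exp (∑ i ∈ t, u i) ≤ E := Real.exp_le_exp.2 h3
    have h5 : ‖∏ i ∈ t, f i z‖ ≤ 1 + ‖(∏ i ∈ t, f i z) - 1‖ := by
      calc ‖∏ i ∈ t, f i z‖ = ‖1 + ((∏ i ∈ t, f i z) - 1)‖ := by ring_nf
        _ ≤ 1 + ‖(∏ i ∈ t, f i z) - 1‖ := by
            simpa using norm_add_le 1 ((∏ i ∈ t, f i z) - 1)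
    calc ‖∏ i ∈ t, f i z‖ ≤ 1 + ((∏ i ∈ t, (1 + u i)) - 1) := by linarith
      _ = ∏ i ∈ t, (1 + u i) := by ring
      _ ≤ E := le_trans h2 h4
  -- key increment bound
  have hincr : ∀ (t t' : Finset ι), t ⊆ t' → ∀ z ∈ s,
      ‖(∏ i ∈ t', f i z) - ∏ i ∈ t, f i z‖
        ≤ E * (Real.exp (∑ i ∈ t' \ t, u i) - 1) := by
    intro t t' hsub z hz
    have hunion : t' = t ∪ (t' \ t) := by rw [Finset.union_sdiff_of_subset hsub]
    have hdisj : Disjoint t (t' \ t) := Finset.disjoint_sdiff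
    have hprod : (∏ i ∈ t', f i z) = (∏ i ∈ t, f i z) * ∏ i ∈ t' \ t, f i z := by
      conv_lhs => rw [hunion]
      rw [Finset.prod_union hdisj]
    rw [hprod]
    have : (∏ i ∈ t, f i z) * (∏ i ∈ t' \ t, f i z) - (∏ i ∈ t, f i z)
        = (∏ i ∈ t, f i z) * ((∏ i ∈ t' \ t, f i z) - 1) := by ring
    rw [this, norm_mul]
    have h1 := prodEst ι (t' \ t) (fun i => f i z) u hu (fun i _ => hle i z hz)
    have h2 : (∏ i ∈ t' \ t, (1 + u i)) - 1 ≤ Real.exp (∑ i ∈ t' \ t, u i) - 1 := by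
      linarith [prodExp ι (t' \ t) u hu]
    have h3 : (0:ℝ) ≤ Real.exp (∑ i ∈ t' \ t, u i) - 1 := by
      have : (0:ℝ) ≤ ∑ i ∈ t' \ t, u i := Finset.sum_nonneg (fun i _ => hu i)
      linarith [Real.one_le_exp this]
    exact mul_le_mul (hPbound t z hz) (le_trans h1 h2) (norm_nonneg _) (by linarith)
  -- now prove uniform Cauchy
  rw [Metric.uniformCauchySeqOn_iff]
  intro ε hε
  have hEpos : (0:ℝ) < E := by linarith
  set δ : ℝ := Real.log (1 + ε / (3 * E)) with hδ
  have hratio : (0:ℝ) < ε / (3 * E) := by positivity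
  have hδpos : 0 < δ := Real.log_pos (by linarith)
  have hexpδ : Real.exp δ = 1 + ε / (3 * E) := Real.exp_log (by linarith)
  -- choose t₀ by vanishing
  have hvan := summable_iff_vanishing.1 hsum (Metric.ball 0 δ) (Metric.ball_mem_nhds 0 hδpos)
  obtain ⟨t₀, ht₀⟩ := hvan
  refine ⟨t₀, fun t₁ ht₁ t₂ ht₂ z hz => ?_⟩
  have key : ∀ t : Finset ι, t₀ ⊆ t →
      ‖(∏ i ∈ t₁ ∪ t₂, f i z) - ∏ i ∈ t, f i z‖ ≤ ε / 3 → True := fun _ _ _ => trivial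
  have step : ∀ t : Finset ι, t₀ ⊆ t → t ⊆ t₁ ∪ t₂ →
      ‖(∏ i ∈ t₁ ∪ t₂, f i z) - ∏ i ∈ t, f i z‖ ≤ ε / 3 := by
    intro t htt hsub
    have hdisj : Disjoint ((t₁ ∪ t₂) \ t) t₀ :=
      Finset.disjoint_of_subset_right htt Finset.sdiff_disjoint
    have hsmall := ht₀ _ hdisj
    rw [Metric.mem_ball, Real.dist_eq, sub_zero] at hsmall
    have hsum' : ∑ i ∈ (t₁ ∪ t₂) \ t, u i < δ :=
      lt_of_le_of_lt (le_abs_self _) hsmall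
    have h1 := hincr t (t₁ ∪ t₂) hsub z hz
    have h2 : Real.exp (∑ i ∈ (t₁ ∪ t₂) \ t, u i) - 1 ≤ Real.exp δ - 1 := by
      have := Real.exp_le_exp.2 hsum'.le
      linarith
    calc ‖(∏ i ∈ t₁ ∪ t₂, f i z) - ∏ i ∈ t, f i z‖
        ≤ E * (Real.exp (∑ i ∈ (t₁ ∪ t₂) \ t, u i) - 1) := h1
      _ ≤ E * (Real.exp δ - 1) := by
          apply mul_le_mul_of_nonneg_left h2 (le_of_lt hEpos)
      _ = ε / 3 := by rw [hexpδ]; field_simp; ring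
  have s1 := step t₁ ht₁ Finset.subset_union_left
  have s2 := step t₂ ht₂ Finset.subset_union_right
  rw [dist_eq_norm]
  have : (∏ i ∈ t₁, f i z) - (∏ i ∈ t₂, f i z)
      = ((∏ i ∈ t₁ ∪ t₂, f i z) - ∏ i ∈ t₂, f i z)
        - ((∏ i ∈ t₁ ∪ t₂, f i z) - ∏ i ∈ t₁, f i z) := by ring
  rw [this]
  calc ‖((∏ i ∈ t₁ ∪ t₂, f i z) - ∏ i ∈ t₂, f i z)
        - ((∏ i ∈ t₁ ∪ t₂, f i z) - ∏ i ∈ t₁, f i z)‖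
      ≤ ‖(∏ i ∈ t₁ ∪ t₂, f i z) - ∏ i ∈ t₂, f i z‖
        + ‖(∏ i ∈ t₁ ∪ t₂, f i z) - ∏ i ∈ t₁, f i z‖ := norm_sub_le _ _
    _ ≤ ε / 3 + ε / 3 := by
        exact add_le_add s2 s1
    _ < ε := by linarith

open Filter Topology in
theorem blaschkeDiffOn (B : ℂ → ℂ) (hB : IsBlaschkeProduct B) :
    DifferentiableOn ℂ B (Metric.ball (0:ℂ) 1) := by
  classical
  obtain ⟨ι, _, m, lam, α, hlam, hα, hsum, hrepr⟩ := hB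
  set f : ι → ℂ → ℂ :=
    fun n z => ((‖α n‖ : ℂ) / α n) * ((α n - z) / (1 - (starRingEnd ℂ) (α n) * z))
    with hf
  set F : ℂ → ℂ := fun z => ∏' n, f n z with hF
  -- uniform Cauchy on closed balls of radius r < 1
  have hUC : ∀ r : ℝ, 0 ≤ r → r < 1 →
      UniformCauchySeqOn (fun t : Finset ι => fun z => ∏ i ∈ t, f i z) Filter.atTop
        (Metric.closedBall (0:ℂ) r) := by
    intro r hr0 hr1
    apply uniformCauchyProd f (fun n => (1 - ‖α n‖) * (2 / (1 - r)))
    · intro i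
      have := (hα i).1
      have : (0:ℝ) < 1 - r := by linarith
      have h2 : (0:ℝ) ≤ 2 / (1 - r) := by positivity
      nlinarith [(hα i).1, norm_nonneg (α i)]
    · exact hsum.mul_right _
    · intro i z hz
      rw [Metric.mem_closedBall, dist_zero_right] at hz
      exact factorEst (α i) z r (hα i).1 (hα i).2 hr1 hz
  -- pointwise convergence on the open ball
  have hpt : ∀ z ∈ Metric.ball (0:ℂ) 1,
      Tendsto (fun t : Finset ι => ∏ i ∈ t, f i z) atTop (𝓝 (F z)) := by
    intro z hz
    rw [Metric.mem_ball, dist_zero_right] at hz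
    have hUC' := hUC (‖z‖) (norm_nonneg z) hz
    have hzmem : z ∈ Metric.closedBall (0:ℂ) (‖z‖) := by
      rw [Metric.mem_closedBall, dist_zero_right]
    have hcs : CauchySeq (fun t : Finset ι => ∏ i ∈ t, f i z) := by
      rw [Metric.cauchySeq_iff]
      intro ε hε
      obtain ⟨t₀, ht₀⟩ := Metric.uniformCauchySeqOn_iff.1 hUC' ε hε
      exact ⟨t₀, fun t₁ h₁ t₂ h₂ => ht₀ t₁ h₁ t₂ h₂ z hzmem⟩
    obtain ⟨a, ha⟩ := cauchySeq_tendsto_of_complete hcs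
    have hhp : HasProd (fun n => f n z) a := ha
    have hFz : F z = a := hhp.tprod_eq
    rw [hFz]
    exact ha
  -- locally uniform convergence on the open ball
  have hTLU : TendstoLocallyUniformlyOn (fun t : Finset ι => fun z => ∏ i ∈ t, f i z) F
      atTop (Metric.ball (0:ℂ) 1) := by
    rw [tendstoLocallyUniformlyOn_iff_forall_isCompact Metric.isOpen_ball]
    intro K hK hKc
    rcases K.eq_empty_or_nonempty with rfl | hne
    · simp [TendstoUniformlyOn]
    · obtain ⟨x₀, hx₀K, hx₀⟩ := hKc.exists_isMaxOn hne continuous_norm.continuousOn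
      have hr1 : ‖x₀‖ < 1 := by
        have := hK hx₀K
        rwa [Metric.mem_ball, dist_zero_right] at this
      have hKsub : K ⊆ Metric.closedBall (0:ℂ) ‖x₀‖ := by
        intro z hzK
        rw [Metric.mem_closedBall, dist_zero_right]
        exact hx₀ hzK
      have := (hUC ‖x₀‖ (norm_nonneg _) hr1).tendstoUniformlyOn_of_tendsto
        (fun z hzmem => by
          apply hpt
          rw [Metric.mem_ball, dist_zero_right]
          rw [Metric.mem_closedBall, dist_zero_right] at hzmem
          exact lt_of_le_of_lt hzmem hr1)
      exact this.mono hKsub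
  -- each partial product is differentiable on the ball
  have hdiff : ∀ t : Finset ι,
      DifferentiableOn ℂ (fun z => ∏ i ∈ t, f i z) (Metric.ball (0:ℂ) 1) := by
    intro t
    induction t using Finset.induction_on with
    | empty => simpa using differentiableOn_const (1:ℂ)
    | insert j t hj ih =>
      have hfj : DifferentiableOn ℂ (f j) (Metric.ball (0:ℂ) 1) := by
        apply DifferentiableOn.mul (differentiableOn_const _)
        apply DifferentiableOn.div
        · exact ((differentiable_const (α j)).sub differentiable_id).differentiableOn
        · exact ((differentiable_const (1:ℂ)).sub
            (differentiable_id.const_mul ((starRingEnd ℂ) (α j)))).differentiableOn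
        · intro z hz
          rw [Metric.mem_ball, dist_zero_right] at hz
          exact denomNe (α j) z (hα j).1 hz.le (Or.inl hz)
      have : (fun z => ∏ i ∈ insert j t, f i z) = fun z => f j z * ∏ i ∈ t, f i z := by
        funext z; rw [Finset.prod_insert hj]
      rw [this]
      exact hfj.mul ih
  have hFdiff : DifferentiableOn ℂ F (Metric.ball (0:ℂ) 1) :=
    hTLU.differentiableOn (Filter.Eventually.of_forall hdiff) Metric.isOpen_ball
  have hGdiff : DifferentiableOn ℂ (fun z => lam * z ^ m * F z) (Metric.ball (0:ℂ) 1) :=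
    (((differentiableOn_const lam).mul (differentiable_pow m).differentiableOn).mul hFdiff)
  exact hGdiff.congr (fun z hz => hrepr z hz)

open Filter Topology in
/-- For a Blaschke product with Property 𝔅 and θ ∈ (0,1), each component of the level set
Ω_{B,θ} contains at least one zero of B and only finitely many zeros of B. -/
theorem stmt4 (B : ℂ → ℂ) (hB : IsBlaschkeProduct B) (hPB : PropertyB B)
    (θ : ℝ) (hθ : θ ∈ Set.Ioo (0:ℝ) 1) :
    ∀ z ∈ levelSet B θ,
      (∃ w ∈ connectedComponentIn (levelSet B θ) z, B w = 0) ∧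
      Set.Finite {w ∈ connectedComponentIn (levelSet B θ) z | B w = 0} := by
  intro z hz
  have hBd : DifferentiableOn ℂ B (Metric.ball (0:ℂ) 1) := blaschkeDiffOn B hB
  set g : ℂ → ℝ := fun w => ‖B w‖ with hg
  have hgc : ContinuousOn g (Metric.ball (0:ℂ) 1) :=
    continuous_norm.comp_continuousOn hBd.continuousOn
  set L : Set ℂ := levelSet B θ with hL
  have hLball : L ⊆ Metric.ball (0:ℂ) 1 := by
    intro w hw
    rw [Metric.mem_ball, dist_zero_right]
    exact hw.1
  have hLopen : IsOpen L := by
    have hset : L = Metric.ball (0:ℂ) 1 ∩ g ⁻¹' Set.Iio θ := by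
      ext w
      simp only [hL, levelSet, Set.mem_setOf_eq, Set.mem_inter_iff, Metric.mem_ball,
        dist_zero_right, Set.mem_preimage, Set.mem_Iio, hg]
    rw [hset]
    exact hgc.isOpen_inter_preimage Metric.isOpen_ball isOpen_Iio
  set Ω : Set ℂ := connectedComponentIn L z with hΩ
  have hzΩ : z ∈ Ω := mem_connectedComponentIn hz
  have hΩL : Ω ⊆ L := connectedComponentIn_subset L z
  have hΩball : Ω ⊆ Metric.ball (0:ℂ) 1 := hΩL.trans hLball
  have hΩopen : IsOpen Ω := hLopen.connectedComponentIn
  have hΩconn : IsPreconnected Ω := isPreconnected_connectedComponentIn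
  have hclsub : closure Ω ⊆ Metric.ball (0:ℂ) 1 := hPB θ hθ z hz
  have hclcomp : IsCompact (closure Ω) :=
    Metric.isCompact_of_isClosed_isBounded isClosed_closure
      (Metric.isBounded_ball.subset hclsub)
  have hgat : ∀ w ∈ closure Ω, ContinuousAt g w := fun w hw =>
    hgc.continuousAt (Metric.isOpen_ball.mem_nhds (hclsub hw))
  -- frontier points have |B| = θ
  have hfr : ∀ w ∈ closure Ω \ Ω, g w = θ := by
    rintro w ⟨hw1, hw2⟩
    have hwb : w ∈ Metric.ball (0:ℂ) 1 := hclsub hw1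
    have hne : (𝓝[Ω] w).NeBot := mem_closure_iff_nhdsWithin_neBot.1 hw1
    have ht : Tendsto g (𝓝[Ω] w) (𝓝 (g w)) :=
      ((hgat w hw1).continuousWithinAt : ContinuousWithinAt g Ω w)
    have hle : g w ≤ θ := by
      refine le_of_tendsto ht ?_
      filter_upwards [self_mem_nhdsWithin] with x hx
      exact (hΩL hx).2.le
    rcases lt_or_eq_of_le hle with hlt | heq
    · exfalso
      have hwL : w ∈ L := by
        refine ⟨?_, hlt⟩
        rwa [Metric.mem_ball, dist_zero_right] at hwb
      have hΩ'open : IsOpen (connectedComponentIn L w) := hLopen.connectedComponentIn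
      have hΩ'nhds : connectedComponentIn L w ∈ 𝓝 w :=
        hΩ'open.mem_nhds (mem_connectedComponentIn hwL)
      obtain ⟨y, hy1, hy2⟩ := mem_closure_iff_nhds.1 hw1 _ hΩ'nhds
      have e1 : connectedComponentIn L w = connectedComponentIn L y :=
        connectedComponentIn_eq hy1
      have e2 : connectedComponentIn L z = connectedComponentIn L y :=
        connectedComponentIn_eq hy2
      exact hw2 (by rw [hΩ, e2, ← e1]; exact mem_connectedComponentIn hwL)
    · exact heq
  -- frontier is nonempty
  have hfr_ne : (closure Ω \ Ω).Nonempty := by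
    by_contra h
    rw [Set.not_nonempty_iff_eq_empty, Set.diff_eq_empty] at h
    have hclopen : IsClopen Ω := ⟨closure_subset_iff_isClosed.1 h, hΩopen⟩
    rcases isClopen_iff.1 hclopen with h1 | h1
    · exact (h1 ▸ hzΩ : z ∈ (∅ : Set ℂ))
    · have : (2:ℂ) ∈ Metric.ball (0:ℂ) 1 := hΩball (h1 ▸ Set.mem_univ _)
      rw [Metric.mem_ball, dist_zero_right] at this
      norm_num at this
  have hBana : AnalyticOnNhd ℂ B (Metric.ball (0:ℂ) 1) :=
    hBd.analyticOnNhd Metric.isOpen_ball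
  -- if B vanishes frequently near a point of the ball, contradiction
  have hnotzero : ∀ p ∈ Metric.ball (0:ℂ) 1, ¬ (∃ᶠ w in 𝓝[≠] p, B w = 0) := by
    intro p hp hfreq
    have hzero := hBana.eqOn_zero_of_preconnected_of_frequently_eq_zero
      (convex_ball (0:ℂ) 1).isPreconnected hp hfreq
    obtain ⟨w, hw⟩ := hfr_ne
    have h1 := hfr w hw
    have h2 : B w = 0 := hzero (hclsub hw.1)
    have h1' : ‖B w‖ = θ := h1
    rw [h2] at h1'
    simp at h1'
    exact absurd h1'.symm (ne_of_gt hθ.1)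
  constructor
  · -- existence of a zero
    by_contra hcon
    push_neg at hcon
    obtain ⟨p, hp, hpmin⟩ := hclcomp.exists_isMinOn ⟨z, subset_closure hzΩ⟩
      (hgc.mono hclsub)
    by_cases hpΩ : p ∈ Ω
    · -- interior minimum: B is constant on Ω, contradiction with frontier value
      have hBp : B p ≠ 0 := hcon p hpΩ
      have hBinv : DifferentiableOn ℂ (fun w => (B w)⁻¹) Ω :=
        (hBd.mono hΩball).inv (fun x hx => hcon x hx)
      have hmax : IsMaxOn (norm ∘ fun w => (B w)⁻¹) Ω p := by
        intro x hx
        have h1 : g p ≤ g x := hpmin (subset_closure hx)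
        have h2 : 0 < g p := by
          rw [hg]; exact norm_pos_iff.mpr hBp
        simp only [Function.comp_apply, norm_inv, Set.mem_setOf_eq]
        exact inv_anti₀ h2 h1
      have heq := Complex.eqOn_of_isPreconnected_of_isMaxOn_norm hΩconn hΩopen hBinv hpΩ hmax
      have hBconst : ∀ x ∈ Ω, B x = B p := by
        intro x hx
        have h1 := heq hx
        simp only [Function.const_apply] at h1
        exact inv_injective h1
      obtain ⟨w, hw⟩ := hfr_ne
      have hθw := hfr w hw
      have hne : (𝓝[Ω] w).NeBot := mem_closure_iff_nhdsWithin_neBot.1 hw.1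
      have ht : Tendsto g (𝓝[Ω] w) (𝓝 (g w)) :=
        ((hgat w hw.1).continuousWithinAt : ContinuousWithinAt g Ω w)
      have ht2 : Tendsto g (𝓝[Ω] w) (𝓝 (g p)) := by
        refine Tendsto.congr' ?_ tendsto_const_nhds
        filter_upwards [self_mem_nhdsWithin] with x hx
        show ‖B p‖ = ‖B x‖
        rw [hBconst x hx]
      have hgw : g w = g p := tendsto_nhds_unique ht ht2
      have : g p < θ := (hΩL hpΩ).2
      rw [hθw] at hgw
      linarith
    · -- boundary minimum: impossible since g z < θ = g p
      have h1 := hfr p ⟨hp, hpΩ⟩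
      have h2 : g p ≤ g z := hpmin (subset_closure hzΩ)
      have h3 : g z < θ := hz.2
      linarith
  · -- finiteness of zeros
    by_contra hinf
    have hinf' : {w ∈ Ω | B w = 0}.Infinite := hinf
    have hZsub : {w ∈ Ω | B w = 0} ⊆ closure Ω := fun w hw => subset_closure hw.1
    obtain ⟨p, hpK, hacc⟩ := hinf'.exists_accPt_of_subset_isCompact hclcomp hZsub
    have hfreq : ∃ᶠ w in 𝓝[≠] p, B w = 0 := by
      rw [frequently_nhdsWithin_iff]
      have := accPt_iff_frequently.1 hacc
      exact this.mono (fun y hy => ⟨hy.2.2, hy.1⟩)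
    exact hnotzero p (hclsub hpK) hfreq


end
end

section
/- Let δ₀ ∈ (0, 1/e), and set γ = 1 + 2/√(−ln δ₀) and δ = δ₀^{1 − 1/√(−ln δ₀)}. Let B and B̃ be Blaschke products whose zero sequences (repeated according to multiplicity) {α_k}_{k∈Λ} and {β_k}_{k∈Λ} are indexed by the same set Λ and satisfy ρ(α_k, β_k) ≤ δ₀ for all k ∈ Λ. If ξ ∈ 𝔻 satisfies ρ(β_k, ξ) ≥ δ for all k ∈ Λ, then |B̃(ξ)| ≤ |B(ξ)|^{1/γ}. -/
noncomputable section

private lemma pd_nonneg (z w : ℂ) : 0 ≤ pseudoDist z w :=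
  div_nonneg (norm_nonneg _) (norm_nonneg _)

private lemma normSq_aux (z w : ℂ) :
    Complex.normSq (1 - (starRingEnd ℂ) z * w) - Complex.normSq (z - w)
      = (1 - Complex.normSq z) * (1 - Complex.normSq w) := by
  simp only [Complex.normSq_apply, Complex.sub_re, Complex.sub_im, Complex.one_re, Complex.one_im,
    Complex.mul_re, Complex.mul_im, Complex.conj_re, Complex.conj_im]
  ring

private lemma one_sub_conj_ne (z w : ℂ) (hz : ‖z‖ < 1) (hw : ‖w‖ ≤ 1) :
    1 - (starRingEnd ℂ) z * w ≠ 0 := by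
  intro h
  have h1 : (starRingEnd ℂ) z * w = 1 := by linear_combination -h
  have h2 : ‖(starRingEnd ℂ) z * w‖ = 1 := by rw [h1, norm_one]
  rw [norm_mul, Complex.norm_conj] at h2
  nlinarith [norm_nonneg w, norm_nonneg z]

private lemma pd_lt_one (z w : ℂ) (hz : ‖z‖ < 1) (hw : ‖w‖ < 1) :
    pseudoDist z w < 1 := by
  have hne := one_sub_conj_ne z w hz hw.le
  have hpos : 0 < ‖1 - (starRingEnd ℂ) z * w‖ := norm_pos_iff.mpr hne
  unfold pseudoDist
  rw [div_lt_one hpos]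
  have hz2 : Complex.normSq z < 1 := by
    rw [← Complex.sq_norm]; nlinarith [norm_nonneg z]
  have hw2 : Complex.normSq w < 1 := by
    rw [← Complex.sq_norm]; nlinarith [norm_nonneg w]
  have h1 : Complex.normSq (z - w) < Complex.normSq (1 - (starRingEnd ℂ) z * w) := by
    nlinarith [normSq_aux z w]
  calc ‖z - w‖ = Real.sqrt (Complex.normSq (z - w)) := Complex.norm_def _
    _ < Real.sqrt (Complex.normSq (1 - (starRingEnd ℂ) z * w)) :=
        Real.sqrt_lt_sqrt (Complex.normSq_nonneg _) h1
    _ = ‖1 - (starRingEnd ℂ) z * w‖ := (Complex.norm_def _).symm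

private lemma pd_symm (z w : ℂ) : pseudoDist z w = pseudoDist w z := by
  unfold pseudoDist
  rw [norm_sub_rev]
  congr 1
  rw [← Complex.norm_conj (1 - (starRingEnd ℂ) w * z)]
  congr 1
  simp only [map_sub, map_one, map_mul, Complex.conj_conj]
  ring

private lemma pd_lower (a x : ℂ) (ha : ‖a‖ < 1) (hx : ‖x‖ < 1) :
    (‖x‖ - ‖a‖) / (1 - ‖a‖ * ‖x‖) ≤ pseudoDist a x := by
  set r := ‖a‖ with hr
  set s := ‖x‖ with hs
  have hr0 : 0 ≤ r := norm_nonneg a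
  have hs0 : 0 ≤ s := norm_nonneg x
  have hrs : 0 < 1 - r * s := by nlinarith
  rcases le_or_gt s r with h | h
  · exact le_trans (div_nonpos_of_nonpos_of_nonneg (by linarith) hrs.le) (pd_nonneg a x)
  · have hne := one_sub_conj_ne a x ha hx.le
    have hpos : 0 < ‖1 - (starRingEnd ℂ) a * x‖ := norm_pos_iff.mpr hne
    unfold pseudoDist
    rw [div_le_div_iff₀ hrs hpos]
    have hc : ((starRingEnd ℂ) a * x).re ≤ r * s := by
      calc ((starRingEnd ℂ) a * x).re ≤ ‖(starRingEnd ℂ) a * x‖ := Complex.re_le_norm _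
        _ = r * s := by rw [norm_mul, Complex.norm_conj]
    set c := ((starRingEnd ℂ) a * x).re with hcdef
    have hre : (a * (starRingEnd ℂ) x).re = c := by
      rw [hcdef]
      simp only [Complex.mul_re, Complex.conj_re, Complex.conj_im]
      ring
    have h1 : Complex.normSq (a - x) = r^2 + s^2 - 2 * c := by
      rw [hr, hs, Complex.sq_norm, Complex.sq_norm, Complex.normSq_sub, hre]
    have h2 : Complex.normSq (1 - (starRingEnd ℂ) a * x) = 1 + r^2 * s^2 - 2 * c := by
      rw [hr, hs, Complex.sq_norm, Complex.sq_norm, Complex.normSq_sub, Complex.normSq_one,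
        Complex.normSq_mul, Complex.normSq_conj]
      simp only [one_mul, map_mul, Complex.conj_conj, hre]
    have hsq : ((s - r) * ‖1 - (starRingEnd ℂ) a * x‖)^2
        ≤ (‖a - x‖ * (1 - r * s))^2 := by
      rw [mul_pow, mul_pow, Complex.sq_norm, Complex.sq_norm, h1, h2]
      have hid : (r^2 + s^2 - 2*c) * (1 - r*s)^2 - (s - r)^2 * (1 + r^2*s^2 - 2*c)
          = 2 * (1 - r^2) * (1 - s^2) * (r*s - c) := by ring
      nlinarith [mul_nonneg (mul_nonneg
        (mul_nonneg (by norm_num : (0:ℝ) ≤ 2) (by nlinarith : (0:ℝ) ≤ 1 - r^2))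
        (by nlinarith : (0:ℝ) ≤ 1 - s^2)) (by linarith : (0:ℝ) ≤ r*s - c)]
    have hL0 : 0 ≤ (s - r) * ‖1 - (starRingEnd ℂ) a * x‖ :=
      mul_nonneg (by linarith) hpos.le
    have hR0 : 0 ≤ ‖a - x‖ * (1 - r * s) :=
      mul_nonneg (norm_nonneg _) hrs.le
    have := Real.sqrt_le_sqrt hsq
    rwa [Real.sqrt_sq hL0, Real.sqrt_sq hR0] at this

private lemma pd_mob (b z w : ℂ) (hb : ‖b‖ < 1) (hz : ‖z‖ < 1)
    (hw : ‖w‖ < 1) :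
    pseudoDist ((b - z) / (1 - (starRingEnd ℂ) b * z)) ((b - w) / (1 - (starRingEnd ℂ) b * w))
      = pseudoDist z w := by
  have hu : (1 - (starRingEnd ℂ) b * z) ≠ 0 := one_sub_conj_ne b z hb hz.le
  have hv : (1 - (starRingEnd ℂ) b * w) ≠ 0 := one_sub_conj_ne b w hb hw.le
  have hu' : (1 - b * (starRingEnd ℂ) z) ≠ 0 := by
    intro h
    apply hu
    have h2 := congrArg (starRingEnd ℂ) h
    simpa [map_sub, map_mul] using h2
  have hzw : (1 - (starRingEnd ℂ) z * w) ≠ 0 := one_sub_conj_ne z w hz hw.le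
  have hbb : (1 - (starRingEnd ℂ) b * b) ≠ 0 := one_sub_conj_ne b b hb hb.le
  have e1 : (b - z) / (1 - (starRingEnd ℂ) b * z) - (b - w) / (1 - (starRingEnd ℂ) b * w)
      = (z - w) * ((starRingEnd ℂ) b * b - 1)
        / ((1 - (starRingEnd ℂ) b * z) * (1 - (starRingEnd ℂ) b * w)) := by
    rw [div_sub_div _ _ hu hv]
    congr 1
    ring
  have e2 : 1 - (starRingEnd ℂ) ((b - z) / (1 - (starRingEnd ℂ) b * z))
        * ((b - w) / (1 - (starRingEnd ℂ) b * w))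
      = (1 - (starRingEnd ℂ) b * b) * (1 - (starRingEnd ℂ) z * w)
        / ((1 - b * (starRingEnd ℂ) z) * (1 - (starRingEnd ℂ) b * w)) := by
    rw [map_div₀]
    simp only [map_sub, map_mul, Complex.conj_conj, map_one]
    rw [div_mul_div_comm, one_sub_div (mul_ne_zero hu' hv)]
    congr 1
    ring
  unfold pseudoDist
  rw [e1, e2, norm_div, norm_div, norm_mul, norm_mul, norm_mul, norm_mul]
  rw [show ‖(starRingEnd ℂ) b * b - 1‖ = ‖1 - (starRingEnd ℂ) b * b‖ from
    norm_sub_rev _ _]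
  rw [show ‖1 - b * (starRingEnd ℂ) z‖ = ‖1 - (starRingEnd ℂ) b * z‖ from by
    rw [← Complex.norm_conj (1 - (starRingEnd ℂ) b * z)]; congr 1
    simp [map_sub, map_mul]]
  have a1 : ‖1 - (starRingEnd ℂ) b * z‖ ≠ 0 := norm_ne_zero_iff.mpr hu
  have a2 : ‖1 - (starRingEnd ℂ) b * w‖ ≠ 0 := norm_ne_zero_iff.mpr hv
  have a3 : ‖1 - (starRingEnd ℂ) b * b‖ ≠ 0 := norm_ne_zero_iff.mpr hbb
  have a4 : ‖1 - (starRingEnd ℂ) z * w‖ ≠ 0 := norm_ne_zero_iff.mpr hzw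
  rw [div_div_div_cancel_right₀ (mul_ne_zero a1 a2), mul_comm (‖1 - (starRingEnd ℂ) b * b‖),
    mul_div_mul_right _ _ a3]

private lemma pd_triangle (b z w : ℂ) (hb : ‖b‖ < 1) (hz : ‖z‖ < 1)
    (hw : ‖w‖ < 1) :
    (pseudoDist b w - pseudoDist b z) / (1 - pseudoDist b z * pseudoDist b w)
      ≤ pseudoDist z w := by
  have hA : ‖(b - z) / (1 - (starRingEnd ℂ) b * z)‖ = pseudoDist b z := by
    rw [norm_div]; rfl
  have hX : ‖(b - w) / (1 - (starRingEnd ℂ) b * w)‖ = pseudoDist b w := by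
    rw [norm_div]; rfl
  have hA1 : ‖(b - z) / (1 - (starRingEnd ℂ) b * z)‖ < 1 := by
    rw [hA]; exact pd_lt_one b z hb hz
  have hX1 : ‖(b - w) / (1 - (starRingEnd ℂ) b * w)‖ < 1 := by
    rw [hX]; exact pd_lt_one b w hb hw
  have h := pd_lower _ _ hA1 hX1
  rwa [hA, hX, pd_mob b z w hb hz hw] at h

private lemma phi_ineq (d γ δ : ℝ) (hd : 0 < d) (hdd : d < δ) (hδ1 : δ < 1)
    (hslope : 1 + d / (δ - d) + d / (1 - d) ≤ γ) {t : ℝ} (ht : t ∈ Set.Icc δ 1) :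
    t ^ γ * (1 - d * t) ≤ t - d := by
  obtain ⟨htδ, ht1⟩ := ht
  have hδ0 : 0 < δ := hd.trans hdd
  have ht0 : 0 < t := lt_of_lt_of_le hδ0 htδ
  have htd : d < t := lt_of_lt_of_le hdd htδ
  have hd1 : d < 1 := hdd.trans hδ1
  have hdt : 0 < 1 - d * t := by nlinarith
  have hud0 : 0 < t - d := sub_pos.2 htd
  set φ : ℝ → ℝ := fun u => Real.log (u - d) - Real.log (1 - d * u) - γ * Real.log u with hφ
  have hderiv : ∀ u ∈ Set.Icc δ 1, HasDerivAt φ (1/(u - d) + d/(1 - d*u) - γ/u) u := by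
    intro u hu
    have hu0 : 0 < u := lt_of_lt_of_le hδ0 hu.1
    have hud : 0 < u - d := by nlinarith [hu.1]
    have hdu : 0 < 1 - d * u := by nlinarith [hu.2]
    have H1 : HasDerivAt (fun y : ℝ => Real.log (y - d)) (1/(u - d)) u := by
      have h := ((hasDerivAt_id u).sub_const d).log (ne_of_gt hud)
      simpa using h
    have H2 : HasDerivAt (fun y : ℝ => Real.log (1 - d * y)) ((0 - d * 1)/(1 - d * u)) u :=
      ((hasDerivAt_const u (1:ℝ)).sub ((hasDerivAt_id u).const_mul d)).log (ne_of_gt hdu)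
    have H3 : HasDerivAt (fun y : ℝ => γ * Real.log y) (γ * u⁻¹) u :=
      (Real.hasDerivAt_log (ne_of_gt hu0)).const_mul γ
    have H := (H1.sub H2).sub H3
    exact H.congr_deriv (by ring)
  have hanti : AntitoneOn φ (Set.Icc δ 1) := by
    apply antitoneOn_of_deriv_nonpos (convex_Icc δ 1)
    · intro u hu
      exact (hderiv u hu).continuousAt.continuousWithinAt
    · intro u hu
      rw [interior_Icc] at hu
      exact (hderiv u ⟨hu.1.le, hu.2.le⟩).differentiableAt.differentiableWithinAt
    · intro u hu
      rw [interior_Icc] at hu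
      obtain ⟨hu1, hu2⟩ := hu
      have hu0 : 0 < u := hδ0.trans hu1
      have hud : 0 < u - d := by nlinarith
      have hdu : 0 < 1 - d * u := by nlinarith
      have h1u : 0 < 1/u := by positivity
      rw [(hderiv u ⟨hu1.le, hu2.le⟩).deriv]
      have hδd : 0 < δ - d := sub_pos.2 hdd
      have h1d : 0 < 1 - d := sub_pos.2 hd1
      have e1 : 1/(u - d) ≤ (δ/(δ - d)) * (1/u) := by
        rw [mul_one_div, div_le_div_iff₀ hud hu0, div_mul_eq_mul_div, le_div_iff₀ hδd]
        nlinarith [mul_nonneg hd.le (sub_nonneg.2 hu1.le)]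
      have e2 : d/(1 - d * u) ≤ (d/(1 - d)) * (1/u) := by
        rw [mul_one_div, div_le_div_iff₀ hdu hu0, div_mul_eq_mul_div, le_div_iff₀ h1d]
        nlinarith [mul_nonneg hd.le (sub_nonneg.2 hu2.le)]
      have hAB : δ/(δ - d) + d/(1 - d) ≤ γ := by
        have hsplit : δ/(δ - d) = 1 + d/(δ - d) := by
          field_simp
          ring
        linarith
      have hmul : (δ/(δ - d)) * (1/u) + (d/(1 - d)) * (1/u) ≤ γ/u := by
        rw [← mul_one_div γ u, ← add_mul]
        exact mul_le_mul_of_nonneg_right hAB h1u.le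
      linarith
  have h10 : φ 1 = 0 := by
    simp [hφ]
  have hφt : 0 ≤ φ t := by
    have h := hanti ⟨htδ, ht1⟩ (Set.right_mem_Icc.mpr hδ1.le) ht1
    rwa [h10] at h
  have hlog : Real.log t * γ + Real.log (1 - d * t) ≤ Real.log (t - d) := by
    simp only [hφ] at hφt
    nlinarith [hφt]
  calc t ^ γ * (1 - d * t)
      = Real.exp (Real.log t * γ) * (1 - d * t) := by rw [Real.rpow_def_of_pos ht0]
    _ = Real.exp (Real.log t * γ) * Real.exp (Real.log (1 - d * t)) := by
        rw [Real.exp_log hdt]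
    _ = Real.exp (Real.log t * γ + Real.log (1 - d * t)) := (Real.exp_add _ _).symm
    _ ≤ Real.exp (Real.log (t - d)) := Real.exp_le_exp.mpr hlog
    _ = t - d := Real.exp_log hud0

private lemma multipliable_of_le_one {ι : Type} (f : ι → ℝ) (h0 : ∀ k, 0 ≤ f k)
    (h1 : ∀ k, f k ≤ 1) : Multipliable f := by
  classical
  refine ⟨⨅ s : Finset ι, ∏ k ∈ s, f k, ?_⟩
  have hant : Antitone fun s : Finset ι => ∏ k ∈ s, f k := by
    intro s t hst
    calc ∏ k ∈ t, f k = (∏ k ∈ t \ s, f k) * ∏ k ∈ s, f k := (Finset.prod_sdiff hst).symm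
      _ ≤ 1 * ∏ k ∈ s, f k :=
          mul_le_mul_of_nonneg_right
            (Finset.prod_le_one (fun i _ => h0 i) (fun i _ => h1 i))
            (Finset.prod_nonneg fun i _ => h0 i)
      _ = ∏ k ∈ s, f k := one_mul _
  exact tendsto_atTop_ciInf hant
    ⟨0, by rintro _ ⟨s, rfl⟩; exact Finset.prod_nonneg fun i _ => h0 i⟩


/-- If the zeros of two Blaschke products are pairwise δ₀-close and ξ keeps pseudo-hyperbolic
distance at least δ from all zeros of B̃, then |B̃(ξ)| ≤ |B(ξ)|^{1/γ}. -/
theorem stmt16 (δ₀ : ℝ) (hδ₀ : δ₀ ∈ Set.Ioo (0:ℝ) (1 / Real.exp 1))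
    (γ δ : ℝ)
    (hγ : γ = 1 + 2 / Real.sqrt (-Real.log δ₀))
    (hδ : δ = δ₀ ^ (1 - 1 / Real.sqrt (-Real.log δ₀)))
    (Λ : Type) (hΛ : Countable Λ)
    (B Bt : ℂ → ℂ) (hB : IsBlaschkeProduct B) (hBt : IsBlaschkeProduct Bt)
    (α β : Λ → ℂ)
    (hαball : ∀ k, ‖α k‖ < 1) (hβball : ∀ k, ‖β k‖ < 1)
    (hBmod : ∀ z ∈ Metric.ball (0:ℂ) 1, ‖B z‖ = ∏' k, pseudoDist (α k) z)
    (hBtmod : ∀ z ∈ Metric.ball (0:ℂ) 1, ‖Bt z‖ = ∏' k, pseudoDist (β k) z)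
    (hpair : ∀ k, pseudoDist (α k) (β k) ≤ δ₀)
    (ξ : ℂ) (hξ : ξ ∈ Metric.ball (0:ℂ) 1)
    (hsep : ∀ k, δ ≤ pseudoDist (β k) ξ) :
    ‖Bt ξ‖ ≤ ‖B ξ‖ ^ (1/γ) := by
  obtain ⟨hδ₀pos, hδ₀lt⟩ := hδ₀
  have hξ1 : ‖ξ‖ < 1 := by
    have := Metric.mem_ball.mp hξ
    rwa [Complex.dist_eq, sub_zero] at this
  -- numeric setup
  set x := Real.sqrt (-Real.log δ₀) with hxdef
  have hL : 1 < -Real.log δ₀ := by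
    have h1 : Real.log δ₀ < Real.log (1 / Real.exp 1) := Real.log_lt_log hδ₀pos hδ₀lt
    rw [Real.log_div one_ne_zero (Real.exp_ne_zero 1), Real.log_one, Real.log_exp] at h1
    linarith
  have hx1 : 1 < x := by
    rw [hxdef, show (1:ℝ) = Real.sqrt 1 from Real.sqrt_one.symm]
    exact Real.sqrt_lt_sqrt (by norm_num) hL
  have hx0 : 0 < x := lt_trans one_pos hx1
  have hxsq : x ^ 2 = -Real.log δ₀ := Real.sq_sqrt (by linarith)
  have hlog : Real.log δ₀ = -x^2 := by linarith [hxsq]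
  have hδ₀exp : δ₀ = Real.exp (-x^2) := by rw [← hlog, Real.exp_log hδ₀pos]
  have hδexp : δ = Real.exp (x - x^2) := by
    rw [hδ, Real.rpow_def_of_pos hδ₀pos, hlog]
    congr 1
    field_simp
    ring
  have hδ₀δ : δ₀ < δ := by
    rw [hδ₀exp, hδexp]
    exact Real.exp_lt_exp.mpr (by nlinarith)
  have hδ1 : δ < 1 := by
    rw [hδexp]
    exact Real.exp_lt_one_iff.mpr (by nlinarith)
  have hγ1 : 1 < γ := by
    rw [hγ]
    nlinarith [div_pos two_pos hx0]
  have hγpos : 0 < γ := lt_trans one_pos hγ1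
  have hslope : 1 + δ₀ / (δ - δ₀) + δ₀ / (1 - δ₀) ≤ γ := by
    have hex : 1 < Real.exp x := by
      rw [show (1:ℝ) = Real.exp 0 from Real.exp_zero.symm]
      exact Real.exp_lt_exp.mpr hx0
    have hex2 : 1 < Real.exp (x^2) := by
      rw [show (1:ℝ) = Real.exp 0 from Real.exp_zero.symm]
      exact Real.exp_lt_exp.mpr (by nlinarith)
    have e1 : δ - δ₀ = δ₀ * (Real.exp x - 1) := by
      rw [hδexp, hδ₀exp, show x - x^2 = -x^2 + x by ring, Real.exp_add]
      ring
    have e2 : 1 - δ₀ = δ₀ * (Real.exp (x^2) - 1) := by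
      have h : Real.exp (-x^2) * Real.exp (x^2) = 1 := by
        rw [← Real.exp_add]; simp
      rw [hδ₀exp, mul_sub, mul_one, h]
    have q1 : δ₀ / (δ - δ₀) ≤ 1/x := by
      rw [e1, div_mul_cancel_left₀ (ne_of_gt hδ₀pos), inv_eq_one_div]
      exact one_div_le_one_div_of_le hx0 (by nlinarith [Real.add_one_le_exp x])
    have q2 : δ₀ / (1 - δ₀) ≤ 1/x := by
      rw [e2, div_mul_cancel_left₀ (ne_of_gt hδ₀pos), inv_eq_one_div]
      exact one_div_le_one_div_of_le hx0 (by nlinarith [Real.add_one_le_exp (x^2)])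
    have : 1 + 2/x ≤ γ := le_of_eq hγ.symm
    have hsum : 1/x + 1/x = 2/x := by ring
    linarith
  -- pointwise inequality
  have key : ∀ k, pseudoDist (β k) ξ ^ γ ≤ pseudoDist (α k) ξ := by
    intro k
    have ht1 : pseudoDist (β k) ξ ≤ 1 := (pd_lt_one _ _ (hβball k) hξ1).le
    have htδ : δ ≤ pseudoDist (β k) ξ := hsep k
    set t := pseudoDist (β k) ξ with htdef
    have ht0 : 0 < t := lt_of_lt_of_le (lt_trans hδ₀pos hδ₀δ) htδ
    have hδ₀1 : δ₀ < 1 := lt_trans hδ₀δ hδ1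
    have h1t : 0 < 1 - δ₀ * t := by nlinarith
    have core : t ^ γ * (1 - δ₀ * t) ≤ t - δ₀ :=
      phi_ineq δ₀ γ δ hδ₀pos hδ₀δ hδ1 hslope ⟨htδ, ht1⟩
    have core' : t ^ γ ≤ (t - δ₀) / (1 - δ₀ * t) := (le_div_iff₀ h1t).mpr core
    set d := pseudoDist (β k) (α k) with hddef
    have hd0 : 0 ≤ d := pd_nonneg _ _
    have hdδ₀ : d ≤ δ₀ := by rw [hddef, pd_symm]; exact hpair k
    have hdt : 0 < 1 - d * t := by nlinarith
    have mono : (t - δ₀) / (1 - δ₀ * t) ≤ (t - d) / (1 - d * t) := by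
      rw [div_le_div_iff₀ h1t hdt]
      nlinarith [mul_nonneg (sub_nonneg.2 hdδ₀) (mul_nonneg ht0.le (sub_nonneg.2 ht1))]
    have tri := pd_triangle (β k) (α k) ξ (hβball k) (hαball k) hξ1
    calc t ^ γ ≤ (t - δ₀) / (1 - δ₀ * t) := core'
      _ ≤ (t - d) / (1 - d * t) := mono
      _ ≤ pseudoDist (α k) ξ := tri
  -- products
  rw [hBmod ξ hξ, hBtmod ξ hξ]
  set f := fun k => pseudoDist (β k) ξ with hfdef
  set g := fun k => pseudoDist (α k) ξ with hgdef
  have hf0 : ∀ k, 0 ≤ f k := fun k => pd_nonneg _ _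
  have hf1 : ∀ k, f k ≤ 1 := fun k => (pd_lt_one _ _ (hβball k) hξ1).le
  have hg0 : ∀ k, 0 ≤ g k := fun k => pd_nonneg _ _
  have hg1 : ∀ k, g k ≤ 1 := fun k => (pd_lt_one _ _ (hαball k) hξ1).le
  have hMf : Multipliable f := multipliable_of_le_one f hf0 hf1
  have hMg : Multipliable g := multipliable_of_le_one g hg0 hg1
  have hTf : Filter.Tendsto (fun s : Finset Λ => ∏ k ∈ s, f k) Filter.atTop
      (nhds (∏' k, f k)) := hMf.hasProd
  have hTg : Filter.Tendsto (fun s : Finset Λ => ∏ k ∈ s, g k) Filter.atTop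
      (nhds (∏' k, g k)) := hMg.hasProd
  have hfnn : 0 ≤ ∏' k, f k :=
    le_of_tendsto_of_tendsto' tendsto_const_nhds hTf
      (fun s => Finset.prod_nonneg fun i _ => hf0 i)
  have hcomp : (∏' k, f k) ^ γ ≤ ∏' k, g k := by
    have hcont : Filter.Tendsto (fun s : Finset Λ => (∏ k ∈ s, f k) ^ γ) Filter.atTop
        (nhds ((∏' k, f k) ^ γ)) :=
      (Real.continuousAt_rpow_const _ γ (Or.inr hγpos.le)).tendsto.comp hTf
    refine le_of_tendsto_of_tendsto' hcont hTg (fun s => ?_)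
    rw [← Real.finset_prod_rpow s f (fun i _ => hf0 i) γ]
    exact Finset.prod_le_prod (fun i _ => Real.rpow_nonneg (hf0 i) γ) (fun i _ => key i)
  calc ∏' k, f k = ((∏' k, f k) ^ γ) ^ (1/γ) := by
        rw [← Real.rpow_mul hfnn, mul_one_div, div_self (ne_of_gt hγpos), Real.rpow_one]
    _ ≤ (∏' k, g k) ^ (1/γ) :=
        Real.rpow_le_rpow (Real.rpow_nonneg hfnn γ) hcomp (by positivity)


end
end
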